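/- arXiv:math/0410001 — 2 statements merged into one kernel-verified Lean document; each statement's English description precedes it below -/
import Mathlib

section
/- There exists a universal constant c > 0 such that for every dimension n and every centrally symmetric convex body K ⊂ ℝ^n, one has (1/2)·σ(S^{n-1} ∩ (1/2)K) ≤ γ(√n·K) ≤ σ(S^{n-1} ∩ 2K) + e^{−cn}. -/
open MeasureTheory Metric
open scoped Pointwise ENNReal

noncomputable section

/-- `ℝ^n` with its Euclidean structure. -/
abbrev Euc (n : ℕ) := EuclideanSpace ℝ (Fin n)

/-- The rotation-invariant probability measure `σ` on the unit Euclidean sphere `S^{n-1}`,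
obtained by normalizing the canonical (rotation-invariant) sphere measure. -/
noncomputable def sphσ (n : ℕ) : Measure (Metric.sphere (0 : Euc n) 1) :=
  ((volume : Measure (Euc n)).toSphere Set.univ)⁻¹ • (volume : Measure (Euc n)).toSphere

/-- `M(K) = ∫_{S^{n-1}} ‖x‖ dσ(x)`, where `N` is the norm with unit ball `K`. -/
noncomputable def Mnorm (n : ℕ) (N : Euc n → ℝ) : ℝ :=
  ∫ x : Metric.sphere (0 : Euc n) 1, N x ∂(sphσ n)

/-- `d(K) = min(−log σ{x ∈ S^{n-1} : ‖x‖ ≤ M/2}, n)`. -/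
noncomputable def dDim (n : ℕ) (N : Euc n → ℝ) : ℝ :=
  min (- Real.log ((sphσ n {x | N x.val ≤ Mnorm n N / 2}).toReal)) n

/-- The standard Gaussian probability measure on `ℝ^n`,
with density `(2π)^{-n/2} e^{-|x|²/2}` w.r.t. Lebesgue measure. -/
noncomputable def gaussian (n : ℕ) : Measure (Euc n) :=
  volume.withDensity fun x =>
    ENNReal.ofReal ((2 * Real.pi) ^ (-(n : ℝ) / 2) * Real.exp (-‖x‖ ^ 2 / 2))

namespace Statement6Aux

lemma gauss_lint (n : ℕ) {b : ℝ} (hb : 0 < b) :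
    ∫⁻ x : Euc n, ENNReal.ofReal (Real.exp (-b * ‖x‖ ^ 2)) =
      ENNReal.ofReal ((Real.pi / b) ^ ((n : ℝ) / 2)) := by
  have hint : Integrable (fun v : Euc n => Real.exp (-b * ‖v‖ ^ 2)) := by
    have h := (GaussianFourier.integrable_cexp_neg_mul_sq_norm_add (V := Euc n) (b := (b : ℂ))
      (by simpa using hb) 0 0).norm
    refine h.congr ?_
    filter_upwards with v
    simp [Complex.norm_exp, ← Complex.ofReal_pow]
  rw [← ofReal_integral_eq_lintegral_ofReal hint
    (Filter.Eventually.of_forall fun x => (Real.exp_pos _).le)]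
  rw [GaussianFourier.integral_rexp_neg_mul_sq_norm hb]
  congr 2
  simp

/-- abbreviation for the gaussian density value -/
def gdens (n : ℕ) (x : Euc n) : ℝ≥0∞ :=
  ENNReal.ofReal ((2 * Real.pi) ^ (-(n : ℝ) / 2) * Real.exp (-‖x‖ ^ 2 / 2))

lemma gaussian_eq (n : ℕ) : gaussian n = volume.withDensity (gdens n) := rfl

lemma gaussian_apply (n : ℕ) {s : Set (Euc n)} (hs : MeasurableSet s) :
    gaussian n s = ∫⁻ x in s, gdens n x := by
  rw [gaussian_eq, withDensity_apply _ hs]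

/-- Tail estimate template. -/
lemma gauss_tail (n : ℕ) {C b : ℝ} (hC : 0 ≤ C) (hb : 0 < b) {S : Set (Euc n)}
    (hS : MeasurableSet S)
    (h : ∀ x ∈ S, (2 * Real.pi) ^ (-(n : ℝ) / 2) * Real.exp (-‖x‖ ^ 2 / 2)
        ≤ C * Real.exp (-b * ‖x‖ ^ 2)) :
    gaussian n S ≤ ENNReal.ofReal (C * (Real.pi / b) ^ ((n : ℝ) / 2)) := by
  rw [gaussian_apply n hS]
  have hmeas : Measurable fun x : Euc n => ENNReal.ofReal (C * Real.exp (-b * ‖x‖ ^ 2)) := by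
    apply Measurable.ennreal_ofReal
    exact (continuous_const.mul ((continuous_const.mul (continuous_norm.pow 2)).rexp)).measurable
  calc ∫⁻ x in S, gdens n x
      ≤ ∫⁻ x in S, ENNReal.ofReal (C * Real.exp (-b * ‖x‖ ^ 2)) := by
        refine setLIntegral_mono hmeas fun x hx => ?_
        exact ENNReal.ofReal_le_ofReal (h x hx)
    _ ≤ ∫⁻ x, ENNReal.ofReal (C * Real.exp (-b * ‖x‖ ^ 2)) := setLIntegral_le_lintegral _ _
    _ = ENNReal.ofReal C * ∫⁻ x, ENNReal.ofReal (Real.exp (-b * ‖x‖ ^ 2)) := by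
        have hm : Measurable fun x : Euc n => ENNReal.ofReal (Real.exp (-b * ‖x‖ ^ 2)) :=
          Measurable.ennreal_ofReal
            ((continuous_const.mul (continuous_norm.pow 2)).rexp).measurable
        simp_rw [ENNReal.ofReal_mul hC]
        rw [lintegral_const_mul _ hm]
    _ = ENNReal.ofReal (C * (Real.pi / b) ^ ((n : ℝ) / 2)) := by
        rw [gauss_lint n hb, ← ENNReal.ofReal_mul hC]

lemma gaussian_univ (n : ℕ) : gaussian n Set.univ = 1 := by
  rw [gaussian_apply n MeasurableSet.univ]
  rw [Measure.restrict_univ]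
  have : ∀ x : Euc n, gdens n x
      = ENNReal.ofReal ((2 * Real.pi) ^ (-(n : ℝ) / 2))
        * ENNReal.ofReal (Real.exp (-(1/2) * ‖x‖ ^ 2)) := by
    intro x
    rw [gdens, ← ENNReal.ofReal_mul (by positivity)]
    congr 2
    ring
  simp_rw [this]
  rw [lintegral_const_mul _ (by
    exact Measurable.ennreal_ofReal
      ((continuous_const.mul (continuous_norm.pow 2)).rexp).measurable)]
  rw [gauss_lint n (by norm_num : (0:ℝ) < 1/2)]
  rw [← ENNReal.ofReal_mul (by positivity)]
  have hπ : (0:ℝ) < 2 * Real.pi := by positivity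
  have h12 : Real.pi / (1/2) = 2 * Real.pi := by ring
  rw [h12, ← Real.rpow_add hπ]
  have h0 : -(n:ℝ)/2 + (n:ℝ)/2 = 0 := by ring
  rw [h0, Real.rpow_zero, ENNReal.ofReal_one]

lemma polar (n : ℕ) (T : Set (sphere (0 : Euc n) 1)) (hT : MeasurableSet T)
    (J : Set (Set.Ioi (0:ℝ))) (hJ : MeasurableSet J) :
    gaussian n (Subtype.val '' ((homeomorphUnitSphereProd (Euc n)) ⁻¹' (T ×ˢ J)))
      = (volume : Measure (Euc n)).toSphere T *
        ∫⁻ r in J, ENNReal.ofReal ((2*Real.pi) ^ (-(n:ℝ)/2) * Real.exp (-(r:ℝ)^2/2))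
          ∂(Measure.volumeIoiPow (Module.finrank ℝ (Euc n) - 1)) := by
  classical
  have h0 : MeasurableSet ({0}ᶜ : Set (Euc n)) := (measurableSet_singleton 0).compl
  set homeo := homeomorphUnitSphereProd (Euc n) with hhomeo
  set A' : Set ({(0:Euc n)}ᶜ : Set (Euc n)) := homeo ⁻¹' (T ×ˢ J) with hA'def
  have hA' : MeasurableSet A' := homeo.measurable (hT.prod hJ)
  have hA : MeasurableSet (Subtype.val '' A') :=
    (MeasurableEmbedding.subtype_coe h0).measurableSet_image.2 hA'
  set F : (sphere (0:Euc n) 1 × Set.Ioi (0:ℝ)) → ℝ≥0∞ :=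
    fun z => ENNReal.ofReal ((2*Real.pi) ^ (-(n:ℝ)/2) * Real.exp (-(z.2:ℝ)^2/2)) with hFdef
  have hFm : Measurable F := by
    apply Measurable.ennreal_ofReal
    exact (continuous_const.mul
      ((((continuous_subtype_val.comp continuous_snd).pow 2).neg.div_const 2).rexp)).measurable
  have hmp := (volume : Measure (Euc n)).measurePreserving_homeomorphUnitSphereProd
  rw [gaussian_eq, withDensity_apply _ hA, ← setLIntegral_subtype h0 A' (gdens n)]
  have hre : ∀ y : ({(0:Euc n)}ᶜ : Set (Euc n)), gdens n y.1 = F (homeo y) := by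
    intro y
    simp only [hFdef, gdens, hhomeo, homeomorphUnitSphereProd_apply_snd_coe]
  calc ∫⁻ y in A', gdens n y.1 ∂((volume : Measure (Euc n)).comap Subtype.val)
      = ∫⁻ y in A', F (homeo y) ∂((volume : Measure (Euc n)).comap Subtype.val) := by
        exact setLIntegral_congr_fun hA' (fun y _ => hre y)
    _ = ∫⁻ z in T ×ˢ J, F z
          ∂(((volume : Measure (Euc n)).toSphere).prod
            (Measure.volumeIoiPow (Module.finrank ℝ (Euc n) - 1))) := by
        rw [hA'def]
        exact hmp.setLIntegral_comp_preimage_emb homeo.measurableEmbedding F _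
    _ = (volume : Measure (Euc n)).toSphere T *
        ∫⁻ r in J, ENNReal.ofReal ((2*Real.pi) ^ (-(n:ℝ)/2) * Real.exp (-(r:ℝ)^2/2))
          ∂(Measure.volumeIoiPow (Module.finrank ℝ (Euc n) - 1)) := by
        rw [← Measure.prod_restrict, lintegral_prod _ hFm.aemeasurable]
        simp only [hFdef]
        rw [lintegral_const]
        rw [Measure.restrict_apply_univ, mul_comm]

lemma ratio_rpow {a u : ℝ} (ha : 0 < a) (hu : 0 ≤ u) :
    (2*Real.pi)^(-u) * (a*Real.pi)^u = (a/2)^u := by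
  rw [Real.rpow_neg (by positivity), inv_mul_eq_div,
    ← Real.div_rpow (by positivity) (by positivity)]
  congr 1
  have := Real.pi_ne_zero
  field_simp

lemma exp_32_ge : (4:ℝ) ≤ Real.exp (3/2) := by
  have h1 : Real.exp (3/2) ^ 2 = Real.exp 3 := by
    rw [← Real.exp_nat_mul]; norm_num
  have h2 : Real.exp 3 = Real.exp 1 ^ 3 := by
    rw [← Real.exp_nat_mul]; norm_num
  have he : (2.7:ℝ) ≤ Real.exp 1 := by linarith [Real.exp_one_gt_d9]
  have h3 : (2.7:ℝ)^3 ≤ Real.exp 1 ^ 3 := by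
    exact pow_le_pow_left₀ (by norm_num) he 3
  have h3' : (19.683:ℝ) ≤ Real.exp 1 ^ 3 := by nlinarith
  nlinarith [Real.exp_pos (3/2 : ℝ)]

lemma num1 {n : ℕ} (hn : 1 ≤ n) :
    (2*Real.pi) ^ (-(n:ℝ)/2) * Real.exp (-(3/2)*n) * (Real.pi/(1/8)) ^ ((n:ℝ)/2) ≤ 1/2 := by
  have hu : (0:ℝ) ≤ (n:ℝ)/2 := by positivity
  have h8 : Real.pi/(1/8) = 8*Real.pi := by ring
  have hr : (2*Real.pi)^(-((n:ℝ)/2)) * (8*Real.pi)^((n:ℝ)/2) = (4:ℝ)^((n:ℝ)/2) := by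
    rw [ratio_rpow (by norm_num) hu]; norm_num
  have h4 : (4:ℝ)^((n:ℝ)/2) = 2^n := by
    rw [show (n:ℝ)/2 = (1/2)*(n:ℝ) by ring, Real.rpow_mul (by norm_num),
      show (4:ℝ)^(1/2:ℝ) = 2 by
        rw [← Real.sqrt_eq_rpow, show (4:ℝ) = 2^2 by norm_num, Real.sqrt_sq (by norm_num)],
      Real.rpow_natCast]
  have hexp : Real.exp (-(3/2)*(n:ℝ)) = Real.exp (-(3/2))^n := by
    rw [← Real.exp_nat_mul]; ring_nf
  have key : (2*Real.pi) ^ (-(n:ℝ)/2) * Real.exp (-(3/2)*n) * (Real.pi/(1/8)) ^ ((n:ℝ)/2)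
      = (Real.exp (-(3/2)) * 2)^n := by
    rw [h8, show -(n:ℝ)/2 = -((n:ℝ)/2) by ring, hexp,
      show (2*Real.pi)^(-((n:ℝ)/2)) * Real.exp (-(3/2):ℝ)^n * (8*Real.pi)^((n:ℝ)/2)
        = (2*Real.pi)^(-((n:ℝ)/2)) * (8*Real.pi)^((n:ℝ)/2) * Real.exp (-(3/2):ℝ)^n by ring,
      hr, h4, ← mul_pow]
    ring
  rw [key]
  have hstep : Real.exp (-(3/2)) * 2 ≤ 1/2 := by
    rw [Real.exp_neg]
    have hinv : (Real.exp (3/2))⁻¹ ≤ 4⁻¹ := by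
      apply inv_anti₀ (by norm_num) exp_32_ge
    linarith
  calc (Real.exp (-(3/2)) * 2)^n ≤ (1/2:ℝ)^n := by
        apply pow_le_pow_left₀ (by positivity) hstep
    _ ≤ (1/2:ℝ)^1 := by
        apply pow_le_pow_of_le_one (by norm_num) (by norm_num) hn
    _ = 1/2 := pow_one _

lemma num2 {n : ℕ} :
    (2*Real.pi) ^ (-(n:ℝ)/2) * Real.exp ((1/4)*n) * (Real.pi/(3/2)) ^ ((n:ℝ)/2)
      ≤ Real.exp (-(1/4)*n) := by
  have hu : (0:ℝ) ≤ (n:ℝ)/2 := by positivity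
  have h23 : Real.pi/(3/2) = (2/3)*Real.pi := by ring
  have hr : (2*Real.pi)^(-((n:ℝ)/2)) * ((2/3)*Real.pi)^((n:ℝ)/2) = ((1:ℝ)/3)^((n:ℝ)/2) := by
    rw [ratio_rpow (by norm_num) hu]; norm_num
  have key : (2*Real.pi) ^ (-(n:ℝ)/2) * Real.exp ((1/4)*n) * (Real.pi/(3/2)) ^ ((n:ℝ)/2)
      = Real.exp ((1/4)*n) * ((1:ℝ)/3)^((n:ℝ)/2) := by
    rw [h23, show -(n:ℝ)/2 = -((n:ℝ)/2) by ring,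
      show (2*Real.pi)^(-((n:ℝ)/2)) * Real.exp ((1/4)*(n:ℝ)) * ((2/3)*Real.pi)^((n:ℝ)/2)
        = (2*Real.pi)^(-((n:ℝ)/2)) * ((2/3)*Real.pi)^((n:ℝ)/2) * Real.exp ((1/4)*(n:ℝ)) by ring,
      hr]
    ring
  rw [key]
  have h13 : ((1:ℝ)/3)^((n:ℝ)/2) = ((3:ℝ)^((n:ℝ)/2))⁻¹ := by
    rw [show (1:ℝ)/3 = (3:ℝ)⁻¹ by norm_num, Real.inv_rpow (by norm_num)]
  rw [h13]
  have h3e : Real.exp ((n:ℝ)/2) ≤ (3:ℝ)^((n:ℝ)/2) := by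
    rw [← Real.exp_one_rpow ((n:ℝ)/2)]
    apply Real.rpow_le_rpow (Real.exp_pos 1).le (by linarith [Real.exp_one_lt_d9]) hu
  have hpos : (0:ℝ) < (3:ℝ)^((n:ℝ)/2) := Real.rpow_pos_of_pos (by norm_num) _
  rw [mul_inv_le_iff₀ hpos]
  calc Real.exp ((1/4)*(n:ℝ)) = Real.exp (-(1/4)*(n:ℝ)) * Real.exp ((n:ℝ)/2) := by
        rw [← Real.exp_add]; ring_nf
    _ ≤ Real.exp (-(1/4)*(n:ℝ)) * (3:ℝ)^((n:ℝ)/2) := by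
        apply mul_le_mul_of_nonneg_left h3e (Real.exp_pos _).le

lemma smul_set_mono_conv {n : ℕ} {K : Set (Euc n)} (hK : Convex ℝ K) (h0 : (0:Euc n) ∈ K)
    {s t : ℝ} (hs : 0 ≤ s) (hst : s ≤ t) : s • K ⊆ t • K := by
  rcases eq_or_lt_of_le (hs.trans hst) with ht | ht
  · obtain rfl : t = s := le_antisymm (ht ▸ hs) hst
    exact subset_rfl
  · intro x hx
    obtain ⟨k, hk, rfl⟩ := hx
    have h01 : 0 ≤ s/t ∧ s/t ≤ 1 := ⟨div_nonneg hs ht.le, (div_le_one ht).2 hst⟩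
    have hmem : (s/t) • k ∈ K := by
      have := hK h0 hk (by linarith [h01.2] : (0:ℝ) ≤ 1 - s/t) h01.1 (by ring)
      simpa using this
    refine ⟨(s/t) • k, hmem, ?_⟩
    show t • (s/t) • k = s • k
    rw [smul_smul]
    congr 1
    field_simp

lemma zero_mem_of_symm {n : ℕ} {K : Set (Euc n)} (hK : Convex ℝ K)
    (hne : K.Nonempty) (hsym : ∀ x ∈ K, -x ∈ K) : (0:Euc n) ∈ K := by
  obtain ⟨x, hx⟩ := hne
  have := hK hx (hsym x hx) (by norm_num : (0:ℝ) ≤ 1/2) (by norm_num : (0:ℝ) ≤ 1/2) (by norm_num)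
  simpa using this

end Statement6Aux

open Statement6Aux in
/-- Lemma `transfer`: there is a universal constant `c > 0` such that for
every `n ≥ 1` and every centrally symmetric convex body `K ⊆ ℝ^n`,
`(1/2)·σ(S^{n-1} ∩ (1/2)K) ≤ γ(√n·K) ≤ σ(S^{n-1} ∩ 2K) + e^{−cn}`. -/
theorem statement6 :
    ∃ c : ℝ, 0 < c ∧
      ∀ (n : ℕ), 1 ≤ n →
        ∀ K : Set (Euc n), Convex ℝ K → IsCompact K → (interior K).Nonempty →
          (∀ x ∈ K, -x ∈ K) →
          (1 / 2) * (sphσ n {x | (x : Euc n) ∈ (1 / 2 : ℝ) • K}).toReal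
              ≤ (gaussian n (Real.sqrt n • K)).toReal
            ∧ (gaussian n (Real.sqrt n • K)).toReal
              ≤ (sphσ n {x | (x : Euc n) ∈ (2 : ℝ) • K}).toReal + Real.exp (-c * n) := by
  classical
  refine ⟨1/4, by norm_num, fun n hn K hKconv hKcomp hKint hKsym => ?_⟩
  -- basic facts
  haveI : Nonempty (Fin n) := ⟨⟨0, by omega⟩⟩
  have hn1 : (1:ℝ) ≤ (n:ℝ) := by exact_mod_cast hn
  have hsq : (0:ℝ) < Real.sqrt n := Real.sqrt_pos.2 (by linarith)
  have hsq1 : (1:ℝ) ≤ Real.sqrt n := by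
    nlinarith [Real.sq_sqrt (by linarith : (0:ℝ) ≤ (n:ℝ)), Real.sqrt_nonneg (n:ℝ)]
  have h0K : (0:Euc n) ∈ K :=
    zero_mem_of_symm hKconv ⟨_, interior_subset hKint.choose_spec⟩ hKsym
  set σt := (volume : Measure (Euc n)).toSphere with hσt
  have hdim : Module.finrank ℝ (Euc n) = n := finrank_euclideanSpace_fin
  have hU0 : σt Set.univ ≠ 0 := by
    rw [hσt, Measure.toSphere_apply_univ, hdim]
    exact mul_ne_zero (Nat.cast_ne_zero.2 (by omega)) (measure_ball_pos _ _ one_pos).ne'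
  have hUt : σt Set.univ ≠ ⊤ := measure_ne_top _ _
  set homeo := homeomorphUnitSphereProd (Euc n) with hhomeo
  -- sets
  set Thalf : Set (sphere (0 : Euc n) 1) := {x | (x : Euc n) ∈ (1 / 2 : ℝ) • K} with hThalf
  set Ttwo : Set (sphere (0 : Euc n) 1) := {x | (x : Euc n) ∈ (2 : ℝ) • K} with hTtwo
  have hsmul_closed : ∀ a : ℝ, IsClosed (a • K) := by
    intro a
    rw [← Set.image_smul]
    exact (hKcomp.image (continuous_const_smul a)).isClosed
  have hThalf_m : MeasurableSet Thalf :=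
    measurable_subtype_coe (hsmul_closed (1/2)).measurableSet
  have hTtwo_m : MeasurableSet Ttwo :=
    measurable_subtype_coe (hsmul_closed 2).measurableSet
  set Jlow : Set (Set.Ioi (0:ℝ)) := {r | (r:ℝ) ≤ 2 * Real.sqrt n} with hJlow
  have hJlow_m : MeasurableSet Jlow := measurable_subtype_coe measurableSet_Iic
  -- polar identities
  set ν := Measure.volumeIoiPow (Module.finrank ℝ (Euc n) - 1) with hν
  set W : Set (Set.Ioi (0:ℝ)) → ℝ≥0∞ := fun J =>
    ∫⁻ r in J, ENNReal.ofReal ((2*Real.pi) ^ (-(n:ℝ)/2) * Real.exp (-(r:ℝ)^2/2)) ∂ν with hW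
  have hPlow : gaussian n (Subtype.val '' (homeo ⁻¹' (Thalf ×ˢ Jlow))) = σt Thalf * W Jlow :=
    polar n Thalf hThalf_m Jlow hJlow_m
  have hPball : gaussian n (Subtype.val '' (homeo ⁻¹' (Set.univ ×ˢ Jlow)))
      = σt Set.univ * W Jlow := polar n Set.univ MeasurableSet.univ Jlow hJlow_m
  have hPup : gaussian n (Subtype.val '' (homeo ⁻¹' (Ttwo ×ˢ Set.univ)))
      = σt Ttwo * W Set.univ := polar n Ttwo hTtwo_m Set.univ MeasurableSet.univ
  have hPfull : gaussian n (Subtype.val '' (homeo ⁻¹' (Set.univ ×ˢ Set.univ)))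
      = σt Set.univ * W Set.univ := polar n Set.univ MeasurableSet.univ Set.univ
        MeasurableSet.univ
  -- the full set is the complement of {0}
  have hfullset : (Subtype.val '' (homeo ⁻¹' ((Set.univ : Set (sphere (0:Euc n) 1)) ×ˢ
      (Set.univ : Set (Set.Ioi (0:ℝ)))))) = ({0}ᶜ : Set (Euc n)) := by
    rw [Set.univ_prod_univ, Set.preimage_univ, Set.image_univ, Subtype.range_coe]
  have hγ0 : gaussian n {(0:Euc n)} = 0 := by
    rw [gaussian_eq]
    exact (withDensity_absolutelyContinuous _ _) (measure_singleton 0)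
  have hγcompl : gaussian n ({(0:Euc n)}ᶜ) = 1 := by
    rw [measure_compl (measurableSet_singleton 0) (by rw [hγ0]; exact ENNReal.zero_ne_top),
      gaussian_univ, hγ0, tsub_zero]
  have hWuniv : W Set.univ = (σt Set.univ)⁻¹ := by
    have h1 : σt Set.univ * W Set.univ = 1 := by rw [← hPfull, hfullset, hγcompl]
    calc W Set.univ = ((σt Set.univ)⁻¹ * σt Set.univ) * W Set.univ := by
          rw [ENNReal.inv_mul_cancel hU0 hUt, one_mul]
      _ = (σt Set.univ)⁻¹ * (σt Set.univ * W Set.univ) := by ring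
      _ = (σt Set.univ)⁻¹ := by rw [h1, mul_one]
  -- geometric inclusions
  have h_low_sub : Subtype.val '' (homeo ⁻¹' (Thalf ×ˢ Jlow)) ⊆ Real.sqrt n • K := by
    rintro x ⟨y, hy, rfl⟩
    have hy1 : (‖(y:Euc n)‖⁻¹ • (y:Euc n)) ∈ (1/2 : ℝ) • K := by
      have := hy.1
      rwa [hThalf, Set.mem_setOf_eq, hhomeo, homeomorphUnitSphereProd_apply_fst_coe] at this
    have hy2 : ‖(y:Euc n)‖ ≤ 2 * Real.sqrt n := by
      have := hy.2
      rwa [hJlow, Set.mem_setOf_eq, hhomeo, homeomorphUnitSphereProd_apply_snd_coe] at this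
    have hx0 : (y:Euc n) ≠ 0 := y.2
    have hxn : ‖(y:Euc n)‖ ≠ 0 := norm_ne_zero_iff.2 hx0
    obtain ⟨k, hk, hks⟩ := hy1
    have hks' : (1/2:ℝ) • k = ‖(y:Euc n)‖⁻¹ • (y:Euc n) := hks
    have hxe : (y:Euc n) = (‖(y:Euc n)‖ * (1/2)) • k := by
      rw [mul_smul, hks', smul_smul, mul_inv_cancel₀ hxn, one_smul]
    rw [hxe]
    apply smul_set_mono_conv hKconv h0K (by positivity)
      (by nlinarith : ‖(y:Euc n)‖ * (1/2) ≤ Real.sqrt n)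
    exact Set.smul_mem_smul_set hk
  have h_ball_sub : closedBall (0:Euc n) (2 * Real.sqrt n)
      ⊆ {0} ∪ Subtype.val '' (homeo ⁻¹' (Set.univ ×ˢ Jlow)) := by
    intro x hx
    rcases eq_or_ne x 0 with rfl | hx0
    · exact Or.inl rfl
    · refine Or.inr ⟨⟨x, hx0⟩, ⟨Set.mem_univ _, ?_⟩, rfl⟩
      show ((homeo ⟨x, hx0⟩).2 : ℝ) ≤ 2 * Real.sqrt n
      rw [hhomeo, homeomorphUnitSphereProd_apply_snd_coe]
      rwa [mem_closedBall_zero_iff] at hx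
  have h_up_sub : Real.sqrt n • K
      ⊆ Subtype.val '' (homeo ⁻¹' (Ttwo ×ˢ Set.univ)) ∪ ball (0:Euc n) (Real.sqrt n / 2) := by
    intro x hx
    by_cases hb : ‖x‖ < Real.sqrt n / 2
    · exact Or.inr (mem_ball_zero_iff.2 hb)
    · push_neg at hb
      have hxp : (0:ℝ) < ‖x‖ := lt_of_lt_of_le (by positivity) hb
      have hx0 : x ≠ 0 := norm_pos_iff.1 hxp
      refine Or.inl ⟨⟨x, hx0⟩, ⟨?_, Set.mem_univ _⟩, rfl⟩
      show ((homeo ⟨x, hx0⟩).1 : Euc n) ∈ (2:ℝ) • K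
      rw [hhomeo, homeomorphUnitSphereProd_apply_fst_coe]
      obtain ⟨k, hk, hkeq⟩ := hx
      have hkeq' : Real.sqrt n • k = x := hkeq
      have hs2 : ‖x‖⁻¹ * Real.sqrt n ≤ 2 := by
        have hinv : ‖x‖⁻¹ ≤ (Real.sqrt n / 2)⁻¹ := inv_anti₀ (by positivity) hb
        have : (Real.sqrt n / 2)⁻¹ = 2 / Real.sqrt n := by
          field_simp
        rw [this] at hinv
        calc ‖x‖⁻¹ * Real.sqrt n ≤ (2 / Real.sqrt n) * Real.sqrt n := by
              apply mul_le_mul_of_nonneg_right hinv (Real.sqrt_nonneg _)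
          _ = 2 := by field_simp
      show ‖x‖⁻¹ • x ∈ (2:ℝ) • K
      rw [← hkeq', smul_smul]
      refine smul_set_mono_conv hKconv h0K (by positivity) ?_ (Set.smul_mem_smul_set hk)
      rw [hkeq']
      exact hs2
  -- tail bounds
  have htail1 : gaussian n {x : Euc n | 2 * Real.sqrt n ≤ ‖x‖} ≤ 1/2 := by
    have hb : (0:ℝ) < 1/8 := by norm_num
    have hC : (0:ℝ) ≤ (2 * Real.pi) ^ (-(n:ℝ)/2) * Real.exp (-(3/2)*n) := by positivity
    have hS : MeasurableSet {x : Euc n | 2 * Real.sqrt n ≤ ‖x‖} :=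
      (isClosed_le continuous_const continuous_norm).measurableSet
    have hpt : ∀ x ∈ {x : Euc n | 2 * Real.sqrt n ≤ ‖x‖},
        (2 * Real.pi) ^ (-(n : ℝ) / 2) * Real.exp (-‖x‖ ^ 2 / 2)
          ≤ ((2 * Real.pi) ^ (-(n:ℝ)/2) * Real.exp (-(3/2)*n)) * Real.exp (-(1/8) * ‖x‖ ^ 2) := by
      intro x hx
      have hx' : 2 * Real.sqrt n ≤ ‖x‖ := hx
      have hx2 : 4 * (n:ℝ) ≤ ‖x‖^2 := by
        have := pow_le_pow_left₀ (by positivity) hx' 2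
        nlinarith [Real.sq_sqrt (by linarith : (0:ℝ) ≤ (n:ℝ))]
      rw [mul_assoc, ← Real.exp_add]
      apply mul_le_mul_of_nonneg_left _ (by positivity)
      apply Real.exp_le_exp.2
      nlinarith
    calc gaussian n {x : Euc n | 2 * Real.sqrt n ≤ ‖x‖}
        ≤ ENNReal.ofReal (((2 * Real.pi) ^ (-(n:ℝ)/2) * Real.exp (-(3/2)*n))
            * (Real.pi/(1/8)) ^ ((n:ℝ)/2)) := gauss_tail n hC hb hS hpt
      _ ≤ ENNReal.ofReal (1/2) := ENNReal.ofReal_le_ofReal (num1 hn)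
      _ = 1/2 := by
          rw [ENNReal.ofReal_div_of_pos (by norm_num)]
          norm_num
  have htail2 : gaussian n {x : Euc n | ‖x‖ ≤ Real.sqrt n / 2}
      ≤ ENNReal.ofReal (Real.exp (-(1/4) * n)) := by
    have hb : (0:ℝ) < 3/2 := by norm_num
    have hC : (0:ℝ) ≤ (2 * Real.pi) ^ (-(n:ℝ)/2) * Real.exp ((1/4)*n) := by positivity
    have hS : MeasurableSet {x : Euc n | ‖x‖ ≤ Real.sqrt n / 2} :=
      (isClosed_le continuous_norm continuous_const).measurableSet
    have hpt : ∀ x ∈ {x : Euc n | ‖x‖ ≤ Real.sqrt n / 2},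
        (2 * Real.pi) ^ (-(n : ℝ) / 2) * Real.exp (-‖x‖ ^ 2 / 2)
          ≤ ((2 * Real.pi) ^ (-(n:ℝ)/2) * Real.exp ((1/4)*n)) * Real.exp (-(3/2) * ‖x‖ ^ 2) := by
      intro x hx
      have hx' : ‖x‖ ≤ Real.sqrt n / 2 := hx
      have hx2 : ‖x‖^2 ≤ (n:ℝ)/4 := by
        have := pow_le_pow_left₀ (norm_nonneg x) hx' 2
        nlinarith [Real.sq_sqrt (by linarith : (0:ℝ) ≤ (n:ℝ))]
      rw [mul_assoc, ← Real.exp_add]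
      apply mul_le_mul_of_nonneg_left _ (by positivity)
      apply Real.exp_le_exp.2
      nlinarith
    calc gaussian n {x : Euc n | ‖x‖ ≤ Real.sqrt n / 2}
        ≤ ENNReal.ofReal (((2 * Real.pi) ^ (-(n:ℝ)/2) * Real.exp ((1/4)*n))
            * (Real.pi/(3/2)) ^ ((n:ℝ)/2)) := gauss_tail n hC hb hS hpt
      _ ≤ ENNReal.ofReal (Real.exp (-(1/4) * n)) := ENNReal.ofReal_le_ofReal num2
  -- gaussian of the scaled body is finite
  have hGfin : gaussian n (Real.sqrt n • K) ≠ ⊤ := by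
    refine (lt_of_le_of_lt (measure_mono (Set.subset_univ _)) ?_).ne
    rw [gaussian_univ]
    exact ENNReal.one_lt_top
  constructor
  · -- lower bound
    have h1 : σt Thalf * W Jlow ≤ gaussian n (Real.sqrt n • K) := by
      rw [← hPlow]
      exact measure_mono h_low_sub
    have h2 : gaussian n (closedBall (0:Euc n) (2 * Real.sqrt n)) ≤ σt Set.univ * W Jlow := by
      refine le_trans (measure_mono h_ball_sub) ?_
      refine le_trans (measure_union_le _ _) ?_
      rw [hγ0, hPball, zero_add]
    have h3 : (1/2 : ℝ≥0∞) ≤ gaussian n (closedBall (0:Euc n) (2 * Real.sqrt n)) := by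
      have hsub : (closedBall (0:Euc n) (2 * Real.sqrt n))ᶜ ⊆ {x : Euc n | 2 * Real.sqrt n ≤ ‖x‖} := by
        intro x hx
        simp only [Set.mem_compl_iff, mem_closedBall_zero_iff, not_le] at hx
        exact le_of_lt hx
      have hcompl : gaussian n (closedBall (0:Euc n) (2 * Real.sqrt n))ᶜ ≤ 1/2 :=
        le_trans (measure_mono hsub) htail1
      have hsum : gaussian n (closedBall (0:Euc n) (2 * Real.sqrt n))
          + gaussian n (closedBall (0:Euc n) (2 * Real.sqrt n))ᶜ = 1 := by
        rw [measure_add_measure_compl measurableSet_closedBall, gaussian_univ]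
      have h12 : (1:ℝ≥0∞) ≤ gaussian n (closedBall (0:Euc n) (2 * Real.sqrt n)) + 1/2 :=
        by
          have := add_le_add (le_refl (gaussian n (closedBall (0:Euc n) (2 * Real.sqrt n)))) hcompl
          rwa [hsum] at this
      have := tsub_le_iff_right.mpr h12
      rwa [ENNReal.sub_half ENNReal.one_ne_top] at this
    have key : (1/2 : ℝ≥0∞) * sphσ n Thalf ≤ gaussian n (Real.sqrt n • K) := by
      have hWge : (1/2 : ℝ≥0∞) ≤ σt Set.univ * W Jlow := le_trans h3 h2
      have hsphσ : sphσ n Thalf = (σt Set.univ)⁻¹ * σt Thalf := by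
        rw [sphσ, Measure.smul_apply, smul_eq_mul]
      calc (1/2 : ℝ≥0∞) * sphσ n Thalf = (1/2) * ((σt Set.univ)⁻¹ * σt Thalf) := by rw [hsphσ]
        _ ≤ (σt Set.univ * W Jlow) * ((σt Set.univ)⁻¹ * σt Thalf) := by
            exact mul_le_mul_left hWge _
        _ = (σt Set.univ * (σt Set.univ)⁻¹) * (σt Thalf * W Jlow) := by ring
        _ = σt Thalf * W Jlow := by rw [ENNReal.mul_inv_cancel hU0 hUt, one_mul]
        _ ≤ gaussian n (Real.sqrt n • K) := h1
    have := ENNReal.toReal_mono hGfin key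
    rw [ENNReal.toReal_mul] at this
    convert this using 2
    simp
  · -- upper bound
    have h4 : gaussian n (Real.sqrt n • K)
        ≤ sphσ n Ttwo + ENNReal.ofReal (Real.exp (-(1/4) * n)) := by
      refine le_trans (measure_mono h_up_sub) ?_
      refine le_trans (measure_union_le _ _) ?_
      apply add_le_add
      · rw [hPup, hWuniv, mul_comm, sphσ, Measure.smul_apply, smul_eq_mul]
      · refine le_trans (measure_mono ?_) htail2
        intro x hx
        exact le_of_lt (mem_ball_zero_iff.1 hx)
    have hTfin : sphσ n Ttwo + ENNReal.ofReal (Real.exp (-(1/4) * n)) ≠ ⊤ := by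
      apply ENNReal.add_ne_top.2
      constructor
      · rw [sphσ, Measure.smul_apply, smul_eq_mul]
        exact ENNReal.mul_ne_top (ENNReal.inv_ne_top.2 hU0) (measure_ne_top _ _)
      · exact ENNReal.ofReal_ne_top
    have := ENNReal.toReal_mono hTfin h4
    rw [ENNReal.toReal_add (by
        rw [sphσ, Measure.smul_apply, smul_eq_mul]
        exact ENNReal.mul_ne_top (ENNReal.inv_ne_top.2 hU0) (measure_ne_top _ _))
      ENNReal.ofReal_ne_top, ENNReal.toReal_ofReal (Real.exp_pos _).le] at this
    convert this using 3
end
end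

section
/- There exists a universal constant c̄ > 0 such that for every dimension k ≥ 1 and every norm ‖·‖ on ℝ^k with centrally symmetric convex unit ball: if X₁, …, X_k are independent random vectors each distributed uniformly on the unit Euclidean sphere S^{k-1} ⊂ ℝ^k, and M denotes the average of ‖·‖ over S^{k-1}, then Prob{ (1/k) Σ_{i=1}^k ‖X_i‖ > M/2 } ≥ c̄/√k. -/
open MeasureTheory Metric
open scoped Pointwise ENNReal RealInnerProductSpace

noncomputable section

namespace Stmt12

variable {k : ℕ}

def sphFun (e : Euc k ≃ₗᵢ[ℝ] Euc k) (x : Metric.sphere (0 : Euc k) 1) :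
    Metric.sphere (0 : Euc k) 1 :=
  ⟨e x.1, by
    rw [mem_sphere_zero_iff_norm, e.norm_map]
    exact mem_sphere_zero_iff_norm.1 x.2⟩

/-- The homeomorphism of the unit sphere induced by a linear isometry equivalence. -/
def sphMap (e : Euc k ≃ₗᵢ[ℝ] Euc k) :
    Metric.sphere (0 : Euc k) 1 ≃ₜ Metric.sphere (0 : Euc k) 1 where
  toEquiv :=
    { toFun := sphFun e
      invFun := sphFun e.symm
      left_inv := fun x => Subtype.ext (e.symm_apply_apply x.1)
      right_inv := fun y => Subtype.ext (e.apply_symm_apply y.1) }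
  continuous_toFun := Continuous.subtype_mk (e.continuous.comp continuous_subtype_val) _
  continuous_invFun := Continuous.subtype_mk (e.symm.continuous.comp continuous_subtype_val) _

lemma sphMap_val (e : Euc k ≃ₗᵢ[ℝ] Euc k) (x : Metric.sphere (0 : Euc k) 1) :
    ((sphMap e x : Euc k)) = e x.1 := rfl

lemma map_toSphere (e : Euc k ≃ₗᵢ[ℝ] Euc k) :
    Measure.map (sphMap e) (volume : Measure (Euc k)).toSphere
      = (volume : Measure (Euc k)).toSphere := by
  ext s hs
  rw [Measure.map_apply (sphMap e).continuous.measurable hs,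
    Measure.toSphere_apply' _ ((sphMap e).continuous.measurable hs),
    Measure.toSphere_apply' _ hs]
  congr 1
  have hset : (Set.Ioo (0:ℝ) 1) • (Subtype.val '' ((sphMap e) ⁻¹' s))
      = ⇑e ⁻¹' ((Set.Ioo (0:ℝ) 1) • (Subtype.val '' s)) := by
    ext y
    constructor
    · rintro ⟨c, hc, -, ⟨x, hx, rfl⟩, rfl⟩
      dsimp only
      refine ⟨c, hc, (sphMap e x : Euc k), ⟨sphMap e x, hx, rfl⟩, ?_⟩
      show c • (e x.1) = e (c • x.1)
      exact (e.map_smul c x.1).symm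
    · rintro ⟨c, hc, -, ⟨z, hz, rfl⟩, hy⟩
      dsimp only at hy
      refine ⟨c, hc, ((sphMap e).symm z : Euc k), ⟨(sphMap e).symm z, ?_, rfl⟩, ?_⟩
      · show sphMap e ((sphMap e).symm z) ∈ s
        rw [Homeomorph.apply_symm_apply]; exact hz
      · dsimp only
        have hy2 : y = e.symm (c • (z : Euc k)) := by
          rw [hy, e.symm_apply_apply]
        rw [hy2, e.symm.map_smul]
        rfl
  rw [hset]
  have h1 : (Measure.map (e.toHomeomorph.toMeasurableEquiv) (volume : Measure (Euc k)))
      = volume := e.measurePreserving.map_eq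
  have h2 := MeasurableEquiv.map_apply (e.toHomeomorph.toMeasurableEquiv)
    (μ := (volume : Measure (Euc k))) ((Set.Ioo (0:ℝ) 1) • (Subtype.val '' s))
  rw [h1] at h2
  exact h2.symm

lemma sphσ_map (e : Euc k ≃ₗᵢ[ℝ] Euc k) :
    Measure.map (sphMap e) (sphσ k) = sphσ k := by
  unfold sphσ
  rw [Measure.map_smul, map_toSphere]

lemma integral_sphσ_comp (e : Euc k ≃ₗᵢ[ℝ] Euc k)
    (f : Metric.sphere (0 : Euc k) 1 → ℝ) :
    ∫ x, f (sphMap e x) ∂(sphσ k) = ∫ x, f x ∂(sphσ k) :=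
  MeasurePreserving.integral_comp ⟨(sphMap e).continuous.measurable, sphσ_map e⟩
    (sphMap e).measurableEmbedding f

lemma sphσ_prob (hk : 1 ≤ k) : IsProbabilityMeasure (sphσ k) := by
  constructor
  have h1 : (volume : Measure (Euc k)).toSphere Set.univ ≠ 0 := by
    rw [Measure.toSphere_apply_univ]
    refine (ENNReal.mul_pos ?_ ?_).ne'
    · simp [finrank_euclideanSpace_fin]; omega
    · exact (Metric.measure_ball_pos _ _ one_pos).ne'
  have h2 : (volume : Measure (Euc k)).toSphere Set.univ ≠ ⊤ := measure_ne_top _ _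
  rw [sphσ, Measure.smul_apply, smul_eq_mul, ENNReal.inv_mul_cancel h1 h2]

lemma integrable_sph (hk : 1 ≤ k) {f : Metric.sphere (0 : Euc k) 1 → ℝ}
    (hf : Continuous f) : Integrable f (sphσ k) := by
  haveI := sphσ_prob hk
  exact hf.integrable_of_hasCompactSupport (HasCompactSupport.of_compactSpace f)

/-- Rotation invariance of moments of linear functionals. -/
lemma integral_inner_pow (u v : Euc k) (hu : ‖u‖ = 1) (hv : ‖v‖ = 1) (p : ℕ) :
    ∫ x : (Metric.sphere (0 : Euc k) 1), (⟪(x : Euc k), u⟫) ^ p ∂(sphσ k)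
      = ∫ x : (Metric.sphere (0 : Euc k) 1), (⟪(x : Euc k), v⟫) ^ p ∂(sphσ k) := by
  set e : Euc k ≃ₗᵢ[ℝ] Euc k := Submodule.reflection (ℝ ∙ (u - v))ᗮ with he
  have heu : e u = v := Submodule.reflection_sub (by rw [hu, hv])
  have hev : e v = u := by
    have := Submodule.reflection_reflection (ℝ ∙ (u - v))ᗮ u
    rw [heu] at this
    exact this
  have key := integral_sphσ_comp e (fun y => (⟪(y : Euc k), u⟫) ^ p)
  rw [← key]
  refine integral_congr_ae (Filter.Eventually.of_forall fun x => ?_)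
  have h : ⟪(sphMap e x : Euc k), u⟫ = ⟪(x : Euc k), v⟫ := by
    rw [sphMap_val, ← hev, e.inner_map_map]
  simp only [h]

/-- coordinate as inner product with a basis vector -/
lemma coord_eq (i : Fin k) (x : Euc k) :
    ⟪x, EuclideanSpace.single i (1:ℝ)⟫ = x i := by
  rw [EuclideanSpace.inner_single_right]
  simp

lemma norm_eps (i : Fin k) : ‖EuclideanSpace.single i (1:ℝ)‖ = 1 := by
  simp

lemma cont_coord (i : Fin k) :
    Continuous (fun x : (Metric.sphere (0 : Euc k) 1) => (x : Euc k) i) :=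
  (EuclideanSpace.proj (𝕜 := ℝ) i).continuous.comp continuous_subtype_val

lemma sum_coord_sq (x : Metric.sphere (0 : Euc k) 1) :
    ∑ i : Fin k, ((x : Euc k) i)^2 = 1 := by
  have hx : ‖(x : Euc k)‖ = 1 := mem_sphere_zero_iff_norm.1 x.2
  have h := EuclideanSpace.norm_eq (x : Euc k)
  rw [hx] at h
  have h2 : ∑ i, ‖(x : Euc k) i‖ ^ 2 = 1 := by
    have hnn : 0 ≤ ∑ i, ‖(x : Euc k) i‖ ^ 2 :=
      Finset.sum_nonneg fun i _ => sq_nonneg _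
    nlinarith [Real.sq_sqrt hnn]
  rw [show ∑ i : Fin k, ((x : Euc k) i)^2 = ∑ i : Fin k, ‖(x : Euc k) i‖ ^ 2 from
    Finset.sum_congr rfl fun i _ => by rw [Real.norm_eq_abs, sq_abs]]
  exact h2

/-- Second moment of a linear functional over the sphere. -/
lemma integral_inner_sq (hk : 1 ≤ k) (u : Euc k) (hu : ‖u‖ = 1) :
    ∫ x : (Metric.sphere (0 : Euc k) 1), (⟪(x : Euc k), u⟫) ^ 2 ∂(sphσ k)
      = (k : ℝ)⁻¹ := by
  haveI := sphσ_prob hk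
  have hcoord : ∀ i : Fin k,
      (∫ x : (Metric.sphere (0 : Euc k) 1), ((x : Euc k) i) ^ 2 ∂(sphσ k))
        = ∫ x : (Metric.sphere (0 : Euc k) 1), (⟪(x : Euc k), u⟫) ^ 2 ∂(sphσ k) := by
    intro i
    have := integral_inner_pow (EuclideanSpace.single i (1:ℝ)) u (norm_eps i) hu 2
    rw [← this]
    refine integral_congr_ae (Filter.Eventually.of_forall fun x => ?_)
    simp only [coord_eq]
  have hsum : ∑ i : Fin k,
      (∫ x : (Metric.sphere (0 : Euc k) 1), ((x : Euc k) i) ^ 2 ∂(sphσ k)) = 1 := by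
    rw [← integral_finset_sum _ (fun i _ => integrable_sph hk (by
      exact (cont_coord i).pow 2))]
    have : ∀ x : (Metric.sphere (0 : Euc k) 1),
        ∑ i : Fin k, ((x : Euc k) i)^2 = (1:ℝ) := sum_coord_sq
    rw [integral_congr_ae (Filter.Eventually.of_forall this)]
    simp
  rw [Finset.sum_congr rfl (fun i _ => hcoord i)] at hsum
  rw [Finset.sum_const, Finset.card_univ, Fintype.card_fin, nsmul_eq_mul] at hsum
  have hk0 : (k : ℝ) ≠ 0 := by positivity
  rw [inv_eq_one_div, eq_div_iff hk0]
  linarith [hsum]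

lemma cont_inner (u : Euc k) :
    Continuous (fun x : (Metric.sphere (0 : Euc k) 1) => ⟪(x : Euc k), u⟫) :=
  Continuous.inner continuous_subtype_val continuous_const

/-- Fourth moment bound for linear functionals on the sphere. -/
lemma integral_inner_quartic (hk : 1 ≤ k) (u : Euc k) (hu : ‖u‖ = 1) :
    ∫ x : (Metric.sphere (0 : Euc k) 1), (⟪(x : Euc k), u⟫) ^ 4 ∂(sphσ k)
      ≤ 3 / (k : ℝ) ^ 2 := by
  haveI := sphσ_prob hk
  have hptle : ∀ x : (Metric.sphere (0 : Euc k) 1), (⟪(x : Euc k), u⟫) ^ 4 ≤ (1:ℝ) := by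
    intro x
    have h1 : |⟪(x : Euc k), u⟫| ≤ 1 := by
      have := abs_real_inner_le_norm (x : Euc k) u
      rwa [mem_sphere_zero_iff_norm.1 x.2, hu, one_mul] at this
    calc (⟪(x : Euc k), u⟫) ^ 4 = (|⟪(x : Euc k), u⟫|)^4 := by
          rw [← abs_pow, abs_of_nonneg (by positivity)]
      _ ≤ 1^4 := by
          exact pow_le_pow_left₀ (abs_nonneg _) h1 4
      _ = 1 := one_pow 4
  rcases eq_or_lt_of_le hk with h1 | hk2
  · -- k = 1
    have : ∫ x : (Metric.sphere (0 : Euc k) 1), (⟪(x : Euc k), u⟫) ^ 4 ∂(sphσ k)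
        ≤ ∫ _x : (Metric.sphere (0 : Euc k) 1), (1:ℝ) ∂(sphσ k) :=
      integral_mono (integrable_sph hk ((cont_inner u).pow 4)) (integrable_const 1) hptle
    rw [integral_const] at this
    simp only [measure_univ, probReal_univ, smul_eq_mul, one_mul] at this
    refine this.trans ?_
    rw [← h1]
    norm_num
  · -- k ≥ 2
    set S := Metric.sphere (0 : Euc k) 1
    set σ := sphσ k
    set I4 := ∫ x : S, (⟪(x : Euc k), u⟫) ^ 4 ∂σ with hI4def
    -- coordinate fourth moments
    have hI4c : ∀ i : Fin k, (∫ x : S, ((x : Euc k) i) ^ 4 ∂σ) = I4 := by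
      intro i
      rw [hI4def, ← integral_inner_pow (EuclideanSpace.single i (1:ℝ)) u (norm_eps i) hu 4]
      refine integral_congr_ae (Filter.Eventually.of_forall fun x => ?_)
      simp only [coord_eq]
    -- cross moments
    have hcross : ∀ i j : Fin k, i ≠ j →
        (∫ x : S, ((x : Euc k) i) ^ 2 * ((x : Euc k) j) ^ 2 ∂σ) = I4 / 3 := by
      intro i j hij
      have hs2 : Real.sqrt 2 ^ 2 = 2 := Real.sq_sqrt (by norm_num)
      have hs0 : Real.sqrt 2 ≠ 0 := by positivity
      have hinner : ⟪EuclideanSpace.single i (1:ℝ), EuclideanSpace.single j (1:ℝ)⟫ = 0 := by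
        rw [coord_eq]
        rw [EuclideanSpace.single_apply]
        simp [hij.symm]
      have hnpm : ∀ c : ℝ, c = 1 ∨ c = -1 →
          ‖(Real.sqrt 2)⁻¹ • (EuclideanSpace.single i (1:ℝ)
            + c • EuclideanSpace.single j (1:ℝ))‖ = 1 := by
        intro c hc
        have hw : ‖EuclideanSpace.single i (1:ℝ) + c • EuclideanSpace.single j (1:ℝ)‖ ^ 2
            = 2 := by
          rw [← real_inner_self_eq_norm_sq, real_inner_add_add_self,
            real_inner_smul_right, hinner, real_inner_smul_left, real_inner_smul_right,
            real_inner_self_eq_norm_sq, real_inner_self_eq_norm_sq]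
          simp only [norm_eps, one_pow]
          rcases hc with h | h <;> rw [h] <;> ring
        have hwn : ‖EuclideanSpace.single i (1:ℝ) + c • EuclideanSpace.single j (1:ℝ)‖
            = Real.sqrt 2 := by
          rw [← Real.sqrt_sq (norm_nonneg _), hw]
        rw [norm_smul, hwn, Real.norm_eq_abs, abs_inv, abs_of_nonneg (Real.sqrt_nonneg 2),
          inv_mul_cancel₀ hs0]
      have hval : ∀ (c : ℝ) (x : S),
          ⟪(x : Euc k), (Real.sqrt 2)⁻¹ • (EuclideanSpace.single i (1:ℝ)
            + c • EuclideanSpace.single j (1:ℝ))⟫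
          = (Real.sqrt 2)⁻¹ * ((x : Euc k) i + c * (x : Euc k) j) := by
        intro c x
        rw [real_inner_smul_right, inner_add_right, real_inner_smul_right, coord_eq, coord_eq]
      have hplus := integral_inner_pow ((Real.sqrt 2)⁻¹ • (EuclideanSpace.single i (1:ℝ)
          + (1:ℝ) • EuclideanSpace.single j (1:ℝ))) u (hnpm 1 (Or.inl rfl)) hu 4
      have hminus := integral_inner_pow ((Real.sqrt 2)⁻¹ • (EuclideanSpace.single i (1:ℝ)
          + (-1:ℝ) • EuclideanSpace.single j (1:ℝ))) u (hnpm (-1) (Or.inr rfl)) hu 4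
      rw [integral_congr_ae (Filter.Eventually.of_forall fun x => by rw [hval 1 x])] at hplus
      rw [integral_congr_ae (Filter.Eventually.of_forall fun x => by rw [hval (-1) x])] at hminus
      -- key algebraic identity
      have hkey : ∀ a b : ℝ, ((Real.sqrt 2)⁻¹ * (a + 1 * b)) ^ 4
          + ((Real.sqrt 2)⁻¹ * (a + (-1) * b)) ^ 4
          = a ^ 4 / 2 + 3 * (a ^ 2 * b ^ 2) + b ^ 4 / 2 := by
        intro a b
        have h4 : ((Real.sqrt 2)⁻¹) ^ 4 = 4⁻¹ := by
          rw [inv_pow]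
          rw [show Real.sqrt 2 ^ 4 = (Real.sqrt 2 ^ 2) ^ 2 by ring, hs2]
          norm_num
        rw [mul_pow, mul_pow, h4]
        ring
      have contp : ∀ c : ℝ, Continuous (fun x : ↑S =>
          ((Real.sqrt 2)⁻¹ * ((x : Euc k) i + c * (x : Euc k) j)) ^ 4) := fun c =>
        (continuous_const.mul ((cont_coord i).add (continuous_const.mul (cont_coord j)))).pow 4
      have hintadd : ∫ x : S, (((Real.sqrt 2)⁻¹ * ((x : Euc k) i + 1 * (x : Euc k) j)) ^ 4
          + ((Real.sqrt 2)⁻¹ * ((x : Euc k) i + (-1) * (x : Euc k) j)) ^ 4) ∂σ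
          = I4 + I4 := by
        rw [integral_add]
        · rw [hplus, hminus]
        · exact integrable_sph hk (contp 1)
        · exact integrable_sph hk (contp (-1))
      rw [integral_congr_ae (Filter.Eventually.of_forall fun x : ↑S =>
        hkey ((x : Euc k) i) ((x : Euc k) j))] at hintadd
      have hsplit : ∫ x : S, (((x : Euc k) i) ^ 4 / 2
          + 3 * (((x : Euc k) i) ^ 2 * ((x : Euc k) j) ^ 2) + ((x : Euc k) j) ^ 4 / 2) ∂σ
          = I4 / 2 + 3 * (∫ x : S, ((x : Euc k) i) ^ 2 * ((x : Euc k) j) ^ 2 ∂σ) + I4 / 2 := by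
        rw [integral_add, integral_add]
        · have hsm := integral_smul (μ := σ) (3:ℝ)
            (fun a : ↑S => ((a : Euc k) i) ^ 2 * ((a : Euc k) j) ^ 2)
          simp only [smul_eq_mul] at hsm
          rw [integral_div, integral_div, hsm, hI4c i, hI4c j]
        · exact Integrable.div_const (integrable_sph hk ((cont_coord i).pow 4)) 2
        · exact Integrable.const_mul (integrable_sph hk
            (((cont_coord i).pow 2).mul ((cont_coord j).pow 2))) 3
        · exact Integrable.add
            (Integrable.div_const (integrable_sph hk ((cont_coord i).pow 4)) 2)
            (Integrable.const_mul (integrable_sph hk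
              (((cont_coord i).pow 2).mul ((cont_coord j).pow 2))) 3)
        · exact Integrable.div_const (integrable_sph hk ((cont_coord j).pow 4)) 2
      rw [hsplit] at hintadd
      linarith
    -- sum expansion
    have hone : (1:ℝ) = ∑ i : Fin k, ∑ j : Fin k,
        ∫ x : S, ((x : Euc k) i) ^ 2 * ((x : Euc k) j) ^ 2 ∂σ := by
      have hpt : ∀ x : S, (1:ℝ) = ∑ i : Fin k, ∑ j : Fin k,
          ((x : Euc k) i) ^ 2 * ((x : Euc k) j) ^ 2 := by
        intro x
        rw [← Finset.sum_mul_sum]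
        rw [sum_coord_sq x]
        norm_num
      have h0 : ∫ x : S, (∑ i : Fin k, ∑ j : Fin k,
          ((x : Euc k) i) ^ 2 * ((x : Euc k) j) ^ 2) ∂σ = (1:ℝ) := by
        rw [integral_congr_ae (Filter.Eventually.of_forall fun x => (hpt x).symm)]
        simp
      have h1 : ∫ x : S, (∑ i : Fin k, ∑ j : Fin k,
          ((x : Euc k) i) ^ 2 * ((x : Euc k) j) ^ 2) ∂σ
          = ∑ i : Fin k, ∑ j : Fin k,
            ∫ x : S, ((x : Euc k) i) ^ 2 * ((x : Euc k) j) ^ 2 ∂σ := by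
        rw [integral_finset_sum _ (fun i _ => (integrable_sph hk
          (continuous_finset_sum _ fun j _ =>
            ((cont_coord i).pow 2).mul ((cont_coord j).pow 2)) :
            Integrable (fun x : S => ∑ j : Fin k, ((x : Euc k) i) ^ 2 * ((x : Euc k) j) ^ 2) σ))]
        exact Finset.sum_congr rfl fun i _ =>
          integral_finset_sum _ (fun j _ => integrable_sph hk
            (((cont_coord i).pow 2).mul ((cont_coord j).pow 2)))
      rw [← h1, h0]
    -- evaluate the double sum
    have heval : ∑ i : Fin k, ∑ j : Fin k,
        (∫ x : S, ((x : Euc k) i) ^ 2 * ((x : Euc k) j) ^ 2 ∂σ)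
        = (k : ℝ) * (I4 + ((k : ℝ) - 1) * (I4 / 3)) := by
      have hrow : ∀ i : Fin k, ∑ j : Fin k,
          (∫ x : S, ((x : Euc k) i) ^ 2 * ((x : Euc k) j) ^ 2 ∂σ)
          = I4 + ((k : ℝ) - 1) * (I4 / 3) := by
        intro i
        rw [← Finset.sum_erase_add _ _ (Finset.mem_univ i)]
        have hdiag : (∫ x : S, ((x : Euc k) i) ^ 2 * ((x : Euc k) i) ^ 2 ∂σ) = I4 := by
          rw [← hI4c i]
          refine integral_congr_ae (Filter.Eventually.of_forall fun x => ?_)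
          ring_nf
        have hoff : ∑ j ∈ Finset.univ.erase i,
            (∫ x : S, ((x : Euc k) i) ^ 2 * ((x : Euc k) j) ^ 2 ∂σ)
            = ((k : ℝ) - 1) * (I4 / 3) := by
          rw [Finset.sum_congr rfl (fun j hj => hcross i j (Finset.ne_of_mem_erase hj).symm)]
          rw [Finset.sum_const, Finset.card_erase_of_mem (Finset.mem_univ i),
            Finset.card_univ, Fintype.card_fin, nsmul_eq_mul]
          rw [Nat.cast_sub hk]
          norm_num
        rw [hdiag, hoff]
        ring
      rw [Finset.sum_congr rfl fun i _ => hrow i]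
      rw [Finset.sum_const, Finset.card_univ, Fintype.card_fin, nsmul_eq_mul]
    rw [heval] at hone
    -- conclude
    have hkpos : (0:ℝ) < k := by positivity
    have hI4val : I4 * ((k : ℝ) * ((k : ℝ) + 2)) = 3 := by nlinarith [hone]
    have hden : (0:ℝ) < (k : ℝ) * ((k : ℝ) + 2) := by positivity
    have : I4 = 3 / ((k : ℝ) * ((k : ℝ) + 2)) := by
      field_simp at hI4val ⊢
      linarith [hI4val]
    rw [this]
    apply div_le_div_of_nonneg_left (by norm_num) (by positivity)
    nlinarith

/-- seminorm of a finite sum -/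
lemma semi_sum (N : Seminorm ℝ (Euc k)) (f : Fin k → Euc k) (s : Finset (Fin k)) :
    N (∑ i ∈ s, f i) ≤ ∑ i ∈ s, N (f i) := by
  classical
  induction s using Finset.cons_induction with
  | empty => simp
  | cons a s ha ih =>
    rw [Finset.sum_cons, Finset.sum_cons]
    calc N (f a + ∑ i ∈ s, f i) ≤ N (f a) + N (∑ i ∈ s, f i) := map_add_le_add N _ _
      _ ≤ N (f a) + ∑ i ∈ s, N (f i) := by linarith

lemma semi_bound (N : Seminorm ℝ (Euc k)) (x : Euc k) :
    N x ≤ (∑ i : Fin k, N (EuclideanSpace.single i (1:ℝ))) * ‖x‖ := by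
  classical
  have hx : x = ∑ i : Fin k, x i • EuclideanSpace.single i (1:ℝ) := by
    have h := (EuclideanSpace.basisFun (Fin k) ℝ).sum_repr x
    simp only [EuclideanSpace.basisFun_repr, EuclideanSpace.basisFun_apply] at h
    exact h.symm
  calc N x = N (∑ i : Fin k, x i • EuclideanSpace.single i (1:ℝ)) := by rw [← hx]
    _ ≤ ∑ i : Fin k, N (x i • EuclideanSpace.single i (1:ℝ)) := semi_sum N _ _
    _ ≤ ∑ i : Fin k, ‖x‖ * N (EuclideanSpace.single i (1:ℝ)) := by
        refine Finset.sum_le_sum fun i _ => ?_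
        rw [map_smul_eq_mul]
        refine mul_le_mul_of_nonneg_right ?_ (apply_nonneg N _)
        have := abs_real_inner_le_norm x (EuclideanSpace.single i (1:ℝ))
        rw [coord_eq, norm_eps, mul_one] at this
        exact this
    _ = (∑ i : Fin k, N (EuclideanSpace.single i (1:ℝ))) * ‖x‖ := by
        rw [Finset.sum_mul]
        exact Finset.sum_congr rfl fun i _ => mul_comm _ _

lemma semi_cont (N : Seminorm ℝ (Euc k)) : Continuous (fun x : Euc k => N x) := by
  set C := ∑ i : Fin k, N (EuclideanSpace.single i (1:ℝ)) with hC
  have hC0 : 0 ≤ C := Finset.sum_nonneg fun i _ => apply_nonneg N _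
  refine (LipschitzWith.of_dist_le_mul (K := C.toNNReal) ?_).continuous
  intro x y
  rw [Real.dist_eq, dist_eq_norm]
  calc |N x - N y| ≤ N (x - y) := abs_sub_map_le_sub N x y
    _ ≤ C * ‖x - y‖ := semi_bound N _
    _ = (C.toNNReal : ℝ) * ‖x - y‖ := by rw [Real.coe_toNNReal C hC0]

set_option maxHeartbeats 1000000 in
/-- Key sphere-side estimate: the sup `b` of the norm on the sphere is controlled by `M`. -/
lemma key_sphere (hk : 1 ≤ k) (N : Seminorm ℝ (Euc k)) (hNz : ∀ x, N x = 0 → x = 0) :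
    ∃ b : ℝ, 0 < b ∧ (∀ x : Metric.sphere (0 : Euc k) 1, N (x : Euc k) ≤ b) ∧
      b / (24 * Real.sqrt (2 * k)) ≤ Mnorm k N := by
  haveI := sphσ_prob hk
  have hk0 : (0:ℝ) < k := by
    have : (1:ℝ) ≤ k := by exact_mod_cast hk
    linarith
  -- the maximizer of N on the sphere
  have hne : (Metric.sphere (0 : Euc k) 1).Nonempty := by
    refine ⟨EuclideanSpace.single ⟨0, hk⟩ (1:ℝ), ?_⟩
    rw [mem_sphere_zero_iff_norm, norm_eps]
  obtain ⟨x₀, hx₀S, hmax⟩ := (isCompact_sphere (0 : Euc k) 1).exists_isMaxOn hne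
    (semi_cont N).continuousOn
  set b := N x₀ with hbdef
  have hx₀n : ‖x₀‖ = 1 := mem_sphere_zero_iff_norm.1 hx₀S
  have hbpos : 0 < b := by
    rcases lt_or_eq_of_le (apply_nonneg N x₀) with h | h
    · exact h
    · exfalso
      have : x₀ = 0 := hNz x₀ h.symm
      rw [this, norm_zero] at hx₀n
      norm_num at hx₀n
  have hble : ∀ x : Metric.sphere (0 : Euc k) 1, N (x : Euc k) ≤ b := fun x => hmax x.2
  have hNle : ∀ v : Euc k, N v ≤ b * ‖v‖ := by
    intro v
    rcases eq_or_ne v 0 with rfl | hv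
    · simp
    · have hvn : ‖v‖ ≠ 0 := norm_ne_zero_iff.2 hv
      have humem : ‖v‖⁻¹ • v ∈ Metric.sphere (0 : Euc k) 1 := by
        rw [mem_sphere_zero_iff_norm, norm_smul, norm_inv, norm_norm,
          inv_mul_cancel₀ hvn]
      have hvv : ‖v‖ • (‖v‖⁻¹ • v) = v := by
        rw [smul_smul, mul_inv_cancel₀ hvn, one_smul]
      have h2 : N v = ‖(‖v‖ : ℝ)‖ * N (‖v‖⁻¹ • v) := by
        rw [← map_smul_eq_mul N, hvv]
      rw [norm_norm] at h2
      rw [h2]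
      have h4 : N (‖v‖⁻¹ • v) ≤ b := hmax humem
      calc ‖v‖ * N (‖v‖⁻¹ • v) ≤ ‖v‖ * b := mul_le_mul_of_nonneg_left h4 (norm_nonneg v)
        _ = b * ‖v‖ := mul_comm _ _
  -- the cap A
  set W : Metric.sphere (0 : Euc k) 1 → ℝ := fun x => (⟪(x : Euc k), x₀⟫) ^ 2 with hWdef
  have hWcont : Continuous W := (cont_inner x₀).pow 2
  set A : Set (Metric.sphere (0 : Euc k) 1) := {x | (2 * (k:ℝ))⁻¹ < W x} with hAdef
  have hAmeas : MeasurableSet A := measurableSet_lt measurable_const hWcont.measurable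
  have hW2 : ∫ x, W x ∂(sphσ k) = (k : ℝ)⁻¹ := integral_inner_sq hk x₀ hx₀n
  have hW4 : ∫ x, (W x) ^ 2 ∂(sphσ k) ≤ 3 / (k : ℝ) ^ 2 := by
    have h := integral_inner_quartic hk x₀ hx₀n
    refine le_trans (le_of_eq ?_) h
    refine integral_congr_ae (Filter.Eventually.of_forall fun x => ?_)
    simp only [hWdef]
    ring
  -- measure of the cap is at least 1/12
  have hcap : (1:ℝ)/12 ≤ ((sphσ k) A).toReal := by
    have hpt : ∀ x : Metric.sphere (0 : Euc k) 1,
        W x ≤ (2 * (k:ℝ))⁻¹ + ((k:ℝ)/12) * (W x) ^ 2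
          + (3/(k:ℝ)) * A.indicator (fun _ => (1:ℝ)) x := by
      intro x
      by_cases hx : x ∈ A
      · rw [Set.indicator_of_mem hx]
        have h1 : (0:ℝ) ≤ (2 * (k:ℝ))⁻¹ := by positivity
        have h2 : ((k:ℝ)/12) * (W x) ^ 2 + 3/(k:ℝ) - W x
            = (((k:ℝ) * W x - 6) ^ 2) / (12 * (k:ℝ)) := by
          field_simp
          ring
        have h3 : (0:ℝ) ≤ (((k:ℝ) * W x - 6) ^ 2) / (12 * (k:ℝ)) := by positivity
        linarith [h2, h3]
      · rw [Set.indicator_of_notMem hx]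
        have h2 : W x ≤ (2 * (k:ℝ))⁻¹ := le_of_not_gt hx
        nlinarith [sq_nonneg (W x), hk0]
    have hint : ∫ x, W x ∂(sphσ k) ≤ ∫ x, ((2 * (k:ℝ))⁻¹ + ((k:ℝ)/12) * (W x) ^ 2
        + (3/(k:ℝ)) * A.indicator (fun _ => (1:ℝ)) x) ∂(sphσ k) := by
      refine integral_mono (integrable_sph hk hWcont) ?_ hpt
      refine Integrable.add (Integrable.add (integrable_const _) ?_) ?_
      · exact Integrable.const_mul (integrable_sph hk (hWcont.pow 2)) _
      · exact Integrable.const_mul ((integrable_const (1:ℝ)).indicator hAmeas) _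
    have heval : ∫ x, ((2 * (k:ℝ))⁻¹ + ((k:ℝ)/12) * (W x) ^ 2
        + (3/(k:ℝ)) * A.indicator (fun _ => (1:ℝ)) x) ∂(sphσ k)
        = (2 * (k:ℝ))⁻¹ + ((k:ℝ)/12) * (∫ x, (W x) ^ 2 ∂(sphσ k))
          + (3/(k:ℝ)) * ((sphσ k) A).toReal := by
      rw [integral_add, integral_add (integrable_const _)]
      · have e1 : ∫ _x : Metric.sphere (0 : Euc k) 1, (2 * (k:ℝ))⁻¹ ∂(sphσ k)
            = (2 * (k:ℝ))⁻¹ := by simp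
        have e2 := integral_smul (μ := sphσ k) ((k:ℝ)/12)
          (fun x : Metric.sphere (0 : Euc k) 1 => (W x) ^ 2)
        simp only [smul_eq_mul] at e2
        have e3 := integral_smul (μ := sphσ k) (3/(k:ℝ))
          (fun x : Metric.sphere (0 : Euc k) 1 => A.indicator (fun _ => (1:ℝ)) x)
        simp only [smul_eq_mul] at e3
        have e4 : ∫ x, A.indicator (fun _ => (1:ℝ)) x ∂(sphσ k)
            = ((sphσ k) A).toReal := by
          rw [integral_indicator_const (1:ℝ) hAmeas, smul_eq_mul, mul_one]; rfl
        rw [e1, e2, e3, e4]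
      · exact Integrable.const_mul (integrable_sph hk (hWcont.pow 2)) _
      · exact Integrable.add (integrable_const _)
          (Integrable.const_mul (integrable_sph hk (hWcont.pow 2)) _)
      · exact Integrable.const_mul ((integrable_const (1:ℝ)).indicator hAmeas) _
    rw [heval, hW2] at hint
    have hq : ((k:ℝ)/12) * (∫ x, (W x) ^ 2 ∂(sphσ k)) ≤ (4 * (k:ℝ))⁻¹ := by
      have := mul_le_mul_of_nonneg_left hW4 (le_of_lt (by positivity : (0:ℝ) < (k:ℝ)/12))
      refine this.trans (le_of_eq ?_)
      field_simp
      ring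
    have h3k : (0:ℝ) < 3/(k:ℝ) := by positivity
    have e1 : (k:ℝ)⁻¹ - (2*(k:ℝ))⁻¹ - (4*(k:ℝ))⁻¹ = (4*(k:ℝ))⁻¹ := by
      field_simp
      ring
    have h4 : (3/(k:ℝ)) * (1/12) ≤ (3/(k:ℝ)) * ((sphσ k) A).toReal := by
      have e2 : (3/(k:ℝ)) * (1/12) = (4*(k:ℝ))⁻¹ := by
        field_simp
        ring
      rw [e2]
      linarith [hint, hq, e1]
    exact le_of_mul_le_mul_left h4 h3k
  -- pointwise lower bound for N on the cap
  set c : ℝ := b / (2 * Real.sqrt (2 * k)) with hcdef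
  have hs2k : 0 < Real.sqrt (2 * k) := Real.sqrt_pos.2 (by positivity)
  have hcpos : 0 < c := by positivity
  have hptN : ∀ x : Metric.sphere (0 : Euc k) 1,
      A.indicator (fun _ => c) x ≤ N (x : Euc k) := by
    intro x
    by_cases hx : x ∈ A
    · rw [Set.indicator_of_mem hx]
      set t : ℝ := ⟪(x : Euc k), x₀⟫ with htdef
      have hxn : ‖(x : Euc k)‖ = 1 := mem_sphere_zero_iff_norm.1 x.2
      have ht2 : (2 * (k:ℝ))⁻¹ < t ^ 2 := hx
      have ht2' : (0:ℝ) < t ^ 2 := lt_trans (by positivity) ht2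
      have htle : t ^ 2 ≤ 1 := by
        have := abs_real_inner_le_norm (x : Euc k) x₀
        rw [hxn, hx₀n, one_mul] at this
        calc t ^ 2 = |t| ^ 2 := (sq_abs t).symm
          _ ≤ 1 ^ 2 := by exact pow_le_pow_left₀ (abs_nonneg t) this 2
          _ = 1 := one_pow 2
      have hnormdec : ‖x₀ - t • (x : Euc k)‖ = Real.sqrt (1 - t ^ 2) := by
        have hsq : ‖x₀ - t • (x : Euc k)‖ ^ 2 = 1 - t ^ 2 := by
          rw [← real_inner_self_eq_norm_sq, inner_sub_sub_self]
          rw [real_inner_smul_right, real_inner_smul_left, real_inner_smul_left,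
            real_inner_smul_right]
          rw [real_inner_self_eq_norm_sq, real_inner_self_eq_norm_sq, hx₀n, hxn]
          have hcomm : ⟪x₀, (x : Euc k)⟫ = t := by rw [real_inner_comm]
          rw [hcomm]
          ring
        rw [← hsq, Real.sqrt_sq (norm_nonneg _)]
      have hsqrtle : Real.sqrt (1 - t ^ 2) ≤ 1 - t ^ 2 / 2 := by
        have h1 : 1 - t ^ 2 ≤ (1 - t ^ 2 / 2) ^ 2 := by nlinarith [sq_nonneg (t^2)]
        have h2 := Real.sqrt_le_sqrt h1
        rwa [Real.sqrt_sq (by nlinarith)] at h2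
      have htri : b ≤ b * (1 - t ^ 2 / 2) + |t| * N (x : Euc k) := by
        have hdecomp : x₀ = (x₀ - t • (x : Euc k)) + t • (x : Euc k) := by abel
        calc b = N x₀ := rfl
          _ = N ((x₀ - t • (x : Euc k)) + t • (x : Euc k)) := by rw [← hdecomp]
          _ ≤ N (x₀ - t • (x : Euc k)) + N (t • (x : Euc k)) := map_add_le_add N _ _
          _ ≤ b * ‖x₀ - t • (x : Euc k)‖ + |t| * N (x : Euc k) := by
              refine add_le_add (hNle _) (le_of_eq ?_)
              rw [map_smul_eq_mul, Real.norm_eq_abs]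
          _ ≤ b * (1 - t ^ 2 / 2) + |t| * N (x : Euc k) := by
              refine add_le_add ?_ le_rfl
              rw [hnormdec]
              exact mul_le_mul_of_nonneg_left hsqrtle hbpos.le
      have habs : 0 < |t| := abs_pos.2 (by intro h; rw [h] at ht2'; simp at ht2')
      have hNx : b * |t| / 2 ≤ N (x : Euc k) := by
        have h1 : b * (t ^ 2 / 2) ≤ |t| * N (x : Euc k) := by nlinarith [htri]
        have h2 : t ^ 2 = |t| * |t| := by rw [← sq_abs]; ring
        rw [h2] at h1
        have h3 : |t| * (b * |t| / 2) ≤ |t| * N (x : Euc k) := by nlinarith [h1]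
        exact le_of_mul_le_mul_left h3 habs
      have htabs : (Real.sqrt (2 * k))⁻¹ ≤ |t| := by
        have h1 : Real.sqrt ((2 * (k:ℝ))⁻¹) ≤ Real.sqrt (t ^ 2) :=
          Real.sqrt_le_sqrt ht2.le
        rwa [Real.sqrt_inv, Real.sqrt_sq_eq_abs] at h1
      calc c = (b / 2) * (Real.sqrt (2 * k))⁻¹ := by rw [hcdef]; ring
        _ ≤ (b / 2) * |t| := mul_le_mul_of_nonneg_left htabs (by positivity)
        _ = b * |t| / 2 := by ring
        _ ≤ N (x : Euc k) := hNx
    · rw [Set.indicator_of_notMem hx]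
      exact apply_nonneg N _
  -- integrate
  have hMint : ∫ x : Metric.sphere (0 : Euc k) 1,
      A.indicator (fun _ => c) x ∂(sphσ k) ≤ Mnorm k N := by
    refine integral_mono ((integrable_const c).indicator hAmeas) ?_ hptN
    exact integrable_sph hk ((semi_cont N).comp continuous_subtype_val)
  rw [integral_indicator_const c hAmeas, smul_eq_mul] at hMint
  refine ⟨b, hbpos, hble, ?_⟩
  have h12 : b / (24 * Real.sqrt (2 * k)) ≤ ((sphσ k) A).toReal * c := by
    rw [hcdef]
    have heq : (1/12) * (b / (2 * Real.sqrt (2 * k))) = b / (24 * Real.sqrt (2 * k)) := by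
      rw [div_mul_div_comm]
      congr 1 <;> ring
    rw [← heq]
    exact mul_le_mul_of_nonneg_right hcap (by positivity)
  exact h12.trans hMint

end Stmt12

set_option maxHeartbeats 1000000 in
/-- lower bound for `P_E`: there is a universal constant `c̄ > 0` such that
for every `k ≥ 1` and every norm on `ℝ^k`: if `X₁, …, X_k` are independent random vectors
uniformly distributed on `S^{k-1} ⊆ ℝ^k`, then `Prob{(1/k)∑ᵢ‖Xᵢ‖ > M/2} ≥ c̄/√k`. -/
theorem statement12 :
    ∃ cbar : ℝ, 0 < cbar ∧
      ∀ (k : ℕ), 1 ≤ k →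
        ∀ (N : Seminorm ℝ (Euc k)), (∀ x, N x = 0 → x = 0) →
          ∀ (Ω : Type) (_ : MeasurableSpace Ω) (P : Measure Ω), IsProbabilityMeasure P →
            ∀ X : Fin k → Ω → (Metric.sphere (0 : Euc k) 1),
              (∀ i, Measurable (X i)) →
              ProbabilityTheory.iIndepFun X P →
              (∀ i, Measure.map (X i) P = sphσ k) →
              (P {ω | Mnorm k N / 2
                  < (1 / (k : ℝ)) * ∑ i, N ((X i ω : Euc k))}).toReal
                ≥ cbar / Real.sqrt k := by
  refine ⟨(100:ℝ)⁻¹, by norm_num, ?_⟩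
  intro k hk N hNz Ω mΩ P hP X hX _hindep hmap
  haveI := hP
  obtain ⟨b, hb, hble, hbM⟩ := Stmt12.key_sphere hk N hNz
  have hk0 : (0:ℝ) < k := by
    have : (1:ℝ) ≤ k := by exact_mod_cast hk
    linarith
  set M : ℝ := Mnorm k ⇑N with hMdef
  have hs2k : (0:ℝ) < Real.sqrt (2 * k) := Real.sqrt_pos.2 (by positivity)
  have hM0 : 0 < M := lt_of_lt_of_le (by positivity) hbM
  -- measurability of the terms
  have hmeas_i : ∀ i, Measurable (fun ω => N ((X i ω : Euc k))) := fun i =>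
    (Stmt12.semi_cont N).measurable.comp (measurable_subtype_coe.comp (hX i))
  set S : Ω → ℝ := fun ω => ∑ i, N ((X i ω : Euc k)) with hSdef
  have hSmeas : Measurable S := Finset.measurable_sum _ fun i _ => hmeas_i i
  set E : Set Ω := {ω | M / 2 < (1 / (k : ℝ)) * S ω} with hEdef
  have hEmeas : MeasurableSet E :=
    measurableSet_lt measurable_const (measurable_const.mul hSmeas)
  -- integrability and expectation of each term
  have hint_i : ∀ i, Integrable (fun ω => N ((X i ω : Euc k))) P := by
    intro i
    refine Integrable.mono' (integrable_const b) (hmeas_i i).aestronglyMeasurable ?_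
    refine Filter.Eventually.of_forall fun ω => ?_
    rw [Real.norm_eq_abs, abs_of_nonneg (apply_nonneg N _)]
    exact hble (X i ω)
  have hEYi : ∀ i, ∫ ω, N ((X i ω : Euc k)) ∂P = M := by
    intro i
    have hg : AEStronglyMeasurable
        (fun x : Metric.sphere (0 : Euc k) 1 => N (x : Euc k)) (Measure.map (X i) P) :=
      ((Stmt12.semi_cont N).comp continuous_subtype_val).aestronglyMeasurable
    have h1 := integral_map (hX i).aemeasurable hg
    rw [hmap i] at h1
    rw [← h1, hMdef]
    rfl
  have hES : ∫ ω, S ω ∂P = (k : ℝ) * M := by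
    rw [hSdef]
    rw [integral_finset_sum _ fun i _ => hint_i i]
    rw [Finset.sum_congr rfl fun i _ => hEYi i, Finset.sum_const, Finset.card_univ,
      Fintype.card_fin, nsmul_eq_mul]
  -- pointwise bound
  have hptS : ∀ ω, S ω ≤ (k : ℝ) * M / 2 + ((k : ℝ) * b) * E.indicator (fun _ => (1:ℝ)) ω := by
    intro ω
    by_cases hω : ω ∈ E
    · rw [Set.indicator_of_mem hω]
      have h1 : S ω ≤ (k : ℝ) * b := by
        rw [hSdef]
        calc ∑ i, N ((X i ω : Euc k)) ≤ ∑ _i : Fin k, b :=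
              Finset.sum_le_sum fun i _ => hble (X i ω)
          _ = (k : ℝ) * b := by
              rw [Finset.sum_const, Finset.card_univ, Fintype.card_fin, nsmul_eq_mul]
      nlinarith [hM0, hk0]
    · rw [Set.indicator_of_notMem hω]
      have h1 : ¬ (M / 2 < (1 / (k : ℝ)) * S ω) := hω
      have h2 : (1 / (k : ℝ)) * S ω ≤ M / 2 := le_of_not_gt h1
      have h3 : S ω = (k : ℝ) * ((1 / (k : ℝ)) * S ω) := by
        field_simp
      rw [mul_zero, add_zero, h3]
      calc (k : ℝ) * ((1 / (k : ℝ)) * S ω) ≤ (k : ℝ) * (M / 2) :=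
            mul_le_mul_of_nonneg_left h2 hk0.le
        _ = (k : ℝ) * M / 2 := by ring
  -- integrate the pointwise bound
  have hSint : Integrable S P := integrable_finset_sum _ fun i _ => hint_i i
  have hRint : Integrable
      (fun ω => (k : ℝ) * M / 2 + ((k : ℝ) * b) * E.indicator (fun _ => (1:ℝ)) ω) P := by
    exact Integrable.add (integrable_const _)
      (Integrable.const_mul ((integrable_const (1:ℝ)).indicator hEmeas) _)
  have hineq := integral_mono hSint hRint hptS
  rw [hES] at hineq
  have heval : ∫ ω, ((k : ℝ) * M / 2 + ((k : ℝ) * b) * E.indicator (fun _ => (1:ℝ)) ω) ∂P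
      = (k : ℝ) * M / 2 + ((k : ℝ) * b) * (P E).toReal := by
    rw [integral_add (integrable_const _)
      (Integrable.const_mul ((integrable_const (1:ℝ)).indicator hEmeas) _)]
    have e2 := integral_smul (μ := P) ((k : ℝ) * b)
      (fun ω => E.indicator (fun _ => (1:ℝ)) ω)
    simp only [smul_eq_mul] at e2
    rw [e2]
    have e3 : ∫ ω, E.indicator (fun _ => (1:ℝ)) ω ∂P = (P E).toReal := by
      rw [integral_indicator_const (1:ℝ) hEmeas, smul_eq_mul, mul_one]; rfl
    rw [e3]
    simp
  rw [heval] at hineq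
  -- conclude : (P E).toReal ≥ M / (2b)
  have hPE : M / (2 * b) ≤ (P E).toReal := by
    have h1 : (k : ℝ) * M / 2 ≤ ((k : ℝ) * b) * (P E).toReal := by linarith
    have h2 : ((k : ℝ) * b) * (M / (2 * b)) ≤ ((k : ℝ) * b) * (P E).toReal := by
      have : ((k : ℝ) * b) * (M / (2 * b)) = (k : ℝ) * M / 2 := by
        field_simp
      rw [this]
      exact h1
    exact le_of_mul_le_mul_left h2 (by positivity)
  -- chain of constants
  have hchain : (100:ℝ)⁻¹ / Real.sqrt k ≤ M / (2 * b) := by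
    have hstep1 : b / (24 * Real.sqrt (2 * k)) / (2 * b) ≤ M / (2 * b) :=
      div_le_div_of_nonneg_right hbM (by positivity)
    have hstep2 : b / (24 * Real.sqrt (2 * k)) / (2 * b)
        = (48 * Real.sqrt (2 * k))⁻¹ := by
      field_simp
      ring
    have hsqk : (0:ℝ) < Real.sqrt k := Real.sqrt_pos.2 hk0
    have hsplit : Real.sqrt (2 * (k:ℝ)) = Real.sqrt 2 * Real.sqrt k := by
      rw [Real.sqrt_mul (by norm_num : (0:ℝ) ≤ 2)]
    have hs2 : Real.sqrt 2 ≤ 2 := by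
      have h4 : Real.sqrt 2 ^ 2 = 2 := Real.sq_sqrt (by norm_num)
      nlinarith [Real.sqrt_nonneg 2]
    have hstep3 : (100:ℝ)⁻¹ / Real.sqrt k ≤ (48 * Real.sqrt (2 * k))⁻¹ := by
      rw [hsplit]
      rw [div_eq_mul_inv, ← mul_inv]
      refine inv_anti₀ (by positivity) ?_
      calc 48 * (Real.sqrt 2 * Real.sqrt k) ≤ 48 * (2 * Real.sqrt k) := by
            refine mul_le_mul_of_nonneg_left ?_ (by norm_num)
            exact mul_le_mul_of_nonneg_right hs2 hsqk.le
        _ = 96 * Real.sqrt k := by ring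
        _ ≤ 100 * Real.sqrt k := by nlinarith [hsqk]
    calc (100:ℝ)⁻¹ / Real.sqrt k ≤ (48 * Real.sqrt (2 * k))⁻¹ := hstep3
      _ = b / (24 * Real.sqrt (2 * k)) / (2 * b) := hstep2.symm
      _ ≤ M / (2 * b) := hstep1
  exact le_trans hchain hPE
end
end
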